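/- For real matrices A ∈ ℝ^{m×n} and B ∈ ℝ^{n×l}, if A has orthonormal columns (AᵀA = I), then the Moore–Penrose pseudoinverse satisfies (AB)† = B†A†. -/

import Mathlib

open Matrix

/-- Moore–Penrose pseudoinverse predicate (the four Penrose conditions). -/
def IsMP {p q : ℕ} (A : Matrix (Fin p) (Fin q) ℝ) (X : Matrix (Fin q) (Fin p) ℝ) : Prop :=
  A * X * A = A ∧ X * A * X = X ∧ (A * X)ᵀ = A * X ∧ (X * A)ᵀ = X * A

/-- spectral (operator) norm of a matrix, induced by Euclidean vector norms. -/
noncomputable def specNorm {p q : ℕ} (A : Matrix (Fin p) (Fin q) ℝ) : ℝ :=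
  ‖LinearMap.toContinuousLinearMap (Matrix.toEuclideanLin A)‖

/-- Euclidean norm of a vector. -/
noncomputable def enorm {p : ℕ} (x : Fin p → ℝ) : ℝ :=
  ‖(WithLp.equiv 2 (Fin p → ℝ)).symm x‖

/-- the `i`-th largest singular value (0-indexed) of a real matrix. -/
noncomputable def sv {p q : ℕ} (A : Matrix (Fin p) (Fin q) ℝ) (i : Fin q) : ℝ :=
  Real.sqrt (((show (Aᵀ * A).IsHermitian by rw [Matrix.IsHermitian, Matrix.conjTranspose_eq_transpose_of_trivial, Matrix.transpose_mul, Matrix.transpose_transpose]).eigenvalues ∘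
    Tuple.sort (show (Aᵀ * A).IsHermitian by rw [Matrix.IsHermitian, Matrix.conjTranspose_eq_transpose_of_trivial, Matrix.transpose_mul, Matrix.transpose_transpose]).eigenvalues) i.rev)

/-- If `A` has orthonormal columns, then `(AB)† = B†A†`. -/
theorem stmt0 {m n l : ℕ} (A : Matrix (Fin m) (Fin n) ℝ) (B : Matrix (Fin n) (Fin l) ℝ)
    (Ad : Matrix (Fin n) (Fin m) ℝ) (Bd : Matrix (Fin l) (Fin n) ℝ)
    (hA : IsMP A Ad) (hB : IsMP B Bd) (horth : Aᵀ * A = 1) :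
    IsMP (A * B) (Bd * Ad) := by
  obtain ⟨hA1, hA2, hA3, hA4⟩ := hA
  obtain ⟨hB1, hB2, hB3, hB4⟩ := hB
  have hAdA : Ad * A = 1 := by
    calc Ad * A = 1 * (Ad * A) := (Matrix.one_mul _).symm
      _ = Aᵀ * A * (Ad * A) := by rw [horth]
      _ = Aᵀ * (A * Ad * A) := by simp only [Matrix.mul_assoc]
      _ = Aᵀ * A := by rw [hA1]
      _ = 1 := horth
  have hAd : Ad = Aᵀ := by
    calc Ad = 1 * Ad := (Matrix.one_mul _).symm
      _ = Aᵀ * A * Ad := by rw [horth]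
      _ = Aᵀ * (A * Ad) := Matrix.mul_assoc _ _ _
      _ = Aᵀ * (A * Ad)ᵀ := by rw [hA3]
      _ = Aᵀ * (Adᵀ * Aᵀ) := by rw [Matrix.transpose_mul]
      _ = Aᵀ * Adᵀ * Aᵀ := (Matrix.mul_assoc _ _ _).symm
      _ = (Ad * A)ᵀ * Aᵀ := by rw [Matrix.transpose_mul]
      _ = (1 : Matrix (Fin n) (Fin n) ℝ) * Aᵀ := by rw [hAdA, Matrix.transpose_one]
      _ = Aᵀ := Matrix.one_mul _
  subst hAd
  have key : ∀ {k : ℕ} (X : Matrix (Fin n) (Fin k) ℝ), Aᵀ * (A * X) = X := by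
    intro k X
    rw [← Matrix.mul_assoc, horth, Matrix.one_mul]
  refine ⟨?_, ?_, ?_, ?_⟩
  · simp only [Matrix.mul_assoc]
    rw [key, ← Matrix.mul_assoc B, hB1]
  · simp only [Matrix.mul_assoc]
    rw [key, ← Matrix.mul_assoc, ← Matrix.mul_assoc, hB2]
  · simp only [Matrix.transpose_mul, Matrix.transpose_transpose, Matrix.mul_assoc]
    rw [← Matrix.mul_assoc Bdᵀ, ← Matrix.transpose_mul, hB3, Matrix.mul_assoc]
  · have h : Bd * Aᵀ * (A * B) = Bd * B := by
      rw [Matrix.mul_assoc, key]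
    rw [h, hB4]
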